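/- Every admissible set of natural numbers with cardinality 193 has diameter (maximum element minus minimum element) at least 694. -/

import Mathlib

def IsAdmissible (H : Finset ℕ) : Prop :=
  ∀ p : ℕ, p.Prime → (H.image (fun n => n % p)).card < p

theorem admissible_diameter_lower_bound_193 (H : Finset ℕ) (hne : H.Nonempty)
    (hcard : H.card = 193) (hH : IsAdmissible H) :
    694 ≤ H.max' hne - H.min' hne := by
  by_contra h
  push_neg at h
  set m := H.min' hne with hm
  have h2 := hH 2 Nat.prime_two
  have h3 := hH 3 Nat.prime_three
  have h5 := hH 5 (by norm_num)
  have key : H.card ≤ ((H.image (fun n => n % 2)) ×ˢ (H.image (fun n => n % 3)) ×ˢ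
      (H.image (fun n => n % 5)) ×ˢ Finset.range 24).card := by
    apply Finset.card_le_card_of_injOn (fun n => (n % 2, n % 3, n % 5, (n - m) / 30))
    · intro n hn
      simp only [Finset.mem_coe, Finset.mem_product, Finset.mem_image, Finset.mem_range]
      refine ⟨⟨n, hn, rfl⟩, ⟨n, hn, rfl⟩, ⟨n, hn, rfl⟩, ?_⟩
      have h1 : n ≤ H.max' hne := Finset.le_max' _ _ hn
      have h2 : m ≤ n := Finset.min'_le _ _ hn
      omega
    · intro a ha b hb hab
      simp only [Prod.mk.injEq] at hab
      obtain ⟨e2, e3, e5, eq⟩ := hab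
      have ha' : m ≤ a := Finset.min'_le _ _ ha
      have hb' : m ≤ b := Finset.min'_le _ _ hb
      omega
  have hc2 : (H.image (fun n => n % 2)).card ≤ 1 := by omega
  have hc3 : (H.image (fun n => n % 3)).card ≤ 2 := by omega
  have hc5 : (H.image (fun n => n % 5)).card ≤ 4 := by omega
  simp only [Finset.card_product, Finset.card_range] at key
  have : (H.image (fun n => n % 2)).card * ((H.image (fun n => n % 3)).card *
      ((H.image (fun n => n % 5)).card * 24)) ≤ 1 * (2 * (4 * 24)) :=
    Nat.mul_le_mul hc2 (Nat.mul_le_mul hc3 (Nat.mul_le_mul hc5 le_rfl))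
  omega
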